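/- arXiv:2207.01735 — 2 statements merged into one kernel-verified Lean document; each statement's English description precedes it below -/
import Mathlib

section
/- Let k be a field of characteristic zero, m ≥ 1, w : Fin m → ℕ a system of weights, and let G ∈ k[x_1,…,x_m] be a nonzero polynomial that is weighted homogeneous of degree d ≥ 1 with respect to w. Then the module of logarithmic vector fields decomposes as an internal direct sum Der(−log X) = Der(−log G) ⊕ k[x]·ε, where ε = (w_1·x_1, …, w_m·x_m) is the Euler field. Concretely: (i) every ξ ∈ Der(−log X) can be written as ξ = η + g·ε with η ∈ Der(−log G) and g ∈ k[x_1,…,x_m]; and (ii) if g·ε ∈ Der(−log G) for some g ∈ k[x_1,…,x_m], then g = 0 (so Der(−log G) ∩ k[x]·ε = 0). -/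
open MvPolynomial

lemma X_mul_pderiv_monomial {k : Type*} [CommRing k] {m : ℕ} (i : Fin m)
    (s : Fin m →₀ ℕ) (a : k) :
    X i * pderiv i (monomial s a) = (s i : MvPolynomial (Fin m) k) * monomial s a := by
  rw [pderiv_monomial]
  rcases Nat.eq_zero_or_pos (s i) with h | h
  · simp [h]
  · have hsum : Finsupp.single i 1 + (s - Finsupp.single i 1) = s := by
      ext j
      rcases eq_or_ne j i with rfl | hj
      · simp only [Finsupp.add_apply, Finsupp.tsub_apply, Finsupp.single_eq_same]
        omega
      · simp [Finsupp.single_eq_of_ne' (Ne.symm hj)]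
    rw [X, monomial_mul, hsum, one_mul, ← map_natCast (C : k →+* MvPolynomial (Fin m) k),
      C_mul_monomial, mul_comm a]

lemma weighted_euler {k : Type*} [CommRing k] {m : ℕ} (w : Fin m → ℕ)
    {G : MvPolynomial (Fin m) k} {d : ℕ} (hG : G.IsWeightedHomogeneous w d) :
    ∑ i, ((w i : MvPolynomial (Fin m) k) * X i) * pderiv i G
      = (d : MvPolynomial (Fin m) k) * G := by
  have key : ∀ s ∈ G.support, ∑ i, ((w i : MvPolynomial (Fin m) k) * X i) *
      pderiv i (monomial s (coeff s G)) = (d : MvPolynomial (Fin m) k) * monomial s (coeff s G) := by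
    intro s hs
    have hws : ∑ i, w i * s i = d := by
      rw [← hG (mem_support_iff.mp hs), Finsupp.weight_apply,
        Finsupp.sum_fintype _ _ (by simp)]
      simp [mul_comm]
    calc ∑ i, ((w i : MvPolynomial (Fin m) k) * X i) * pderiv i (monomial s (coeff s G))
        = ∑ i, ((w i * s i : ℕ) : MvPolynomial (Fin m) k) * monomial s (coeff s G) := by
          refine Finset.sum_congr rfl fun i _ => ?_
          rw [mul_assoc, _root_.X_mul_pderiv_monomial]
          push_cast
          ring
      _ = (d : MvPolynomial (Fin m) k) * monomial s (coeff s G) := by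
          rw [← Finset.sum_mul, ← Nat.cast_sum, hws]
  calc ∑ i, ((w i : MvPolynomial (Fin m) k) * X i) * pderiv i G
      = ∑ i, ∑ s ∈ G.support, ((w i : MvPolynomial (Fin m) k) * X i) *
          pderiv i (monomial s (coeff s G)) := by
        refine Finset.sum_congr rfl fun i _ => ?_
        rw [← Finset.mul_sum, ← map_sum, ← G.as_sum]
    _ = ∑ s ∈ G.support, ∑ i, ((w i : MvPolynomial (Fin m) k) * X i) *
          pderiv i (monomial s (coeff s G)) := Finset.sum_comm
    _ = ∑ s ∈ G.support, (d : MvPolynomial (Fin m) k) * monomial s (coeff s G) :=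
        Finset.sum_congr rfl key
    _ = (d : MvPolynomial (Fin m) k) * G := by rw [← Finset.mul_sum, ← G.as_sum]

/-- For a nonzero weighted homogeneous polynomial `G` of degree `d ≥ 1` over a field of
characteristic zero, the module of logarithmic vector fields decomposes as
`Der(−log X) = Der(−log G) ⊕ k[x]·ε`, where `ε = (w₁·x₁, …, w_m·x_m)` is the Euler field:
(i) every `ξ` with `∑ i, ξᵢ·∂ᵢG ∈ ⟨G⟩` is of the form `ξ = η + g·ε` with `∑ i, ηᵢ·∂ᵢG = 0`;
(ii) if `g·ε` satisfies `∑ i, g·εᵢ·∂ᵢG = 0`, then `g = 0`. -/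
theorem der_log_decomposition {k : Type*} [Field k] [CharZero k] {m : ℕ} (hm : 1 ≤ m)
    (w : Fin m → ℕ) (G : MvPolynomial (Fin m) k) (hG0 : G ≠ 0) (d : ℕ) (hd : 1 ≤ d)
    (hG : G.IsWeightedHomogeneous w d) :
    (∀ ξ : Fin m → MvPolynomial (Fin m) k,
        (∑ i, ξ i * pderiv i G) ∈ Ideal.span {G} →
        ∃ (η : Fin m → MvPolynomial (Fin m) k) (g : MvPolynomial (Fin m) k),
          (∑ i, η i * pderiv i G) = 0 ∧
          ∀ i, ξ i = η i + g * ((w i : MvPolynomial (Fin m) k) * X i))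
    ∧ (∀ g : MvPolynomial (Fin m) k,
        (∑ i, (g * ((w i : MvPolynomial (Fin m) k) * X i)) * pderiv i G) = 0 → g = 0) := by
  have euler := weighted_euler w hG
  have hdk' : (d : k) ≠ 0 := Nat.cast_ne_zero.mpr (by omega)
  have hdk : (C (d : k) : MvPolynomial (Fin m) k) ≠ 0 := by
    simpa using hdk'
  have hdC : (d : MvPolynomial (Fin m) k) = C (d : k) := (map_natCast C d).symm
  have hdinv : C (d : k)⁻¹ * (d : MvPolynomial (Fin m) k) = 1 := by
    rw [hdC, ← C_mul, inv_mul_cancel₀ hdk', C_1]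
  constructor
  · intro ξ hξ
    obtain ⟨c, hc⟩ := Ideal.mem_span_singleton'.mp hξ
    refine ⟨fun i => ξ i - (C (d : k)⁻¹ * c) * ((w i : MvPolynomial (Fin m) k) * X i),
      C (d : k)⁻¹ * c, ?_, fun i => by ring⟩
    have : ∑ i, (ξ i - C (d : k)⁻¹ * c * ((w i : MvPolynomial (Fin m) k) * X i)) * pderiv i G
        = (∑ i, ξ i * pderiv i G)
          - C (d : k)⁻¹ * c * ∑ i, ((w i : MvPolynomial (Fin m) k) * X i) * pderiv i G := by
      rw [Finset.mul_sum, ← Finset.sum_sub_distrib]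
      refine Finset.sum_congr rfl fun i _ => by ring
    rw [this, euler, ← hc]
    linear_combination (-(c * G)) * hdinv
  · intro g hg
    have : g * ((d : MvPolynomial (Fin m) k) * G) = 0 := by
      rw [← euler, Finset.mul_sum, ← hg]
      refine Finset.sum_congr rfl fun i _ => by ring
    rcases mul_eq_zero.mp this with h | h
    · exact h
    · rcases mul_eq_zero.mp h with h | h
      · rw [hdC] at h; exact absurd h hdk
      · exact absurd h hG0
end

section
/- Local generators of the failure-of-transversality ideal FT(π,G): identify ℂ^m with Fin m → ℂ, let G : ℂ^m → ℂ be analytic at a point p, let π be the projection onto the last coordinate (the deformation parameter s), and suppose ∂_mG(p) ≠ 0. Then for a function h : ℂ^m → ℂ analytic at p, the following are equivalent: (i) there is a local relation ξ for G at p whose last component agrees with h on a neighbourhood of p; (ii) there exist functions a_1, …, a_{m−1} analytic at p and a neighbourhood of p on which h = ∑_{i=1}^{m−1} a_i·∂_iG. In other words, near such a point p the ideal FT(π,G) = dπ(Der(−log G)) is generated by the partial derivatives ∂_1G, …, ∂_{m−1}G. -/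
open Filter

/-- The `i`-th partial derivative `∂ᵢG : x ↦ fderiv ℂ G x (eᵢ)` of `G : ℂ^m → ℂ`. -/
noncomputable def partialDeriv' (m : ℕ) (G : (Fin m → ℂ) → ℂ) (i : Fin m) :
    (Fin m → ℂ) → ℂ :=
  fun x => fderiv ℂ G x (Pi.single i 1)

/-- A local relation for `G` at `p` (a local section of `Der(−log G)`): a tuple
`ξ = (ξ_1, …, ξ_m)` of functions analytic at `p` such that `∑ i, ξᵢ·∂ᵢG` vanishes on a
neighbourhood of `p`. -/
def IsLocalRelation (m : ℕ) (G : (Fin m → ℂ) → ℂ) (p : Fin m → ℂ)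
    (ξ : Fin m → (Fin m → ℂ) → ℂ) : Prop :=
  (∀ i, AnalyticAt ℂ (ξ i) p) ∧
    ∀ᶠ x in nhds p, (∑ i, ξ i x * partialDeriv' m G i x) = 0

lemma partialDeriv'_analyticAt {m : ℕ} {G : (Fin m → ℂ) → ℂ} {p : Fin m → ℂ}
    (hG : AnalyticAt ℂ G p) (i : Fin m) : AnalyticAt ℂ (partialDeriv' m G i) p := by
  have h1 : AnalyticAt ℂ (fderiv ℂ G) p := hG.fderiv
  exact ((ContinuousLinearMap.apply ℂ ℂ (Pi.single i (1:ℂ))).analyticAt _).comp h1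

/-- Local generators of the failure-of-transversality ideal `FT(π,G)`: if `∂ₘG(p) ≠ 0`
(the last variable being the deformation parameter `s`), then a function `h` analytic at
`p` agrees near `p` with the last component of a local relation for `G` at `p` iff, near
`p`, `h = ∑_{i<m} aᵢ·∂ᵢG` with the `aᵢ` analytic at `p`; that is, near `p` the ideal
`FT(π,G) = dπ(Der(−log G))` is generated by `∂₁G, …, ∂_{m−1}G`. -/
theorem FT_locally_generated_by_partials {n : ℕ} (G : (Fin (n + 1) → ℂ) → ℂ)
    (p : Fin (n + 1) → ℂ) (hG : AnalyticAt ℂ G p)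
    (hlast : partialDeriv' (n + 1) G (Fin.last n) p ≠ 0)
    (h : (Fin (n + 1) → ℂ) → ℂ) (hh : AnalyticAt ℂ h p) :
    (∃ ξ : Fin (n + 1) → (Fin (n + 1) → ℂ) → ℂ,
        IsLocalRelation (n + 1) G p ξ ∧ ∀ᶠ x in nhds p, ξ (Fin.last n) x = h x)
    ↔ (∃ a : Fin n → (Fin (n + 1) → ℂ) → ℂ, (∀ i, AnalyticAt ℂ (a i) p) ∧
        ∀ᶠ x in nhds p,
          h x = ∑ i : Fin n, a i x * partialDeriv' (n + 1) G i.castSucc x) := by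
  set D := partialDeriv' (n + 1) G (Fin.last n) with hD
  have hDa : AnalyticAt ℂ D p := partialDeriv'_analyticAt hG _
  have hDne : ∀ᶠ x in nhds p, D x ≠ 0 :=
    hDa.continuousAt.eventually_ne hlast
  constructor
  · rintro ⟨ξ, ⟨han, hrel⟩, heq⟩
    refine ⟨fun i x => -ξ i.castSucc x / D x, fun i => ((han _).neg.div hDa hlast), ?_⟩
    filter_upwards [hrel, heq, hDne] with x hrel heq hne
    rw [Fin.sum_univ_castSucc] at hrel
    have step : ∑ i : Fin n, -ξ i.castSucc x / D x * partialDeriv' (n + 1) G i.castSucc x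
        = (∑ i : Fin n, -(ξ i.castSucc x * partialDeriv' (n + 1) G i.castSucc x)) / D x := by
      rw [Finset.sum_div]; exact Finset.sum_congr rfl fun i _ => by ring
    rw [step, Finset.sum_neg_distrib, ← eq_neg_of_add_eq_zero_right hrel,
      mul_div_cancel_right₀ _ hne, heq]
  · rintro ⟨a, han, heq⟩
    refine ⟨Fin.snoc (fun i x => -(a i x) * D x) h, ⟨?_, ?_⟩, ?_⟩
    · intro i
      induction i using Fin.lastCases with
      | last => simpa [Fin.snoc] using hh
      | cast i =>
        rw [Fin.snoc_castSucc]; exact (han i).neg.mul hDa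
    · filter_upwards [heq] with x hx
      rw [Fin.sum_univ_castSucc]
      simp only [Fin.snoc_castSucc, Fin.snoc_last]
      rw [hx]
      rw [Finset.sum_mul]
      rw [← Finset.sum_add_distrib]
      apply Finset.sum_eq_zero
      intro i _
      ring
    · filter_upwards with x
      simp [Fin.snoc]
end
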